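/- For any integer n ≥ 1, τ(n) + 1 ≥ τ^(e)(n) + τ*(n), where τ* counts the unitary divisors of n. -/
import Mathlib


open Finset

/-- The number of exponential divisors of n. -/
def taue (n : ℕ) : ℕ := ∏ p ∈ n.primeFactors, (n.factorization p).divisors.card

lemma card_divisors_le_self' (m : ℕ) : m.divisors.card ≤ m := by
  calc m.divisors.card ≤ (Finset.Icc 1 m).card := by
        apply Finset.card_le_card
        intro d hd
        have h1 := Nat.pos_of_mem_divisors hd
        rw [Nat.mem_divisors] at hd
        rw [Finset.mem_Icc]
        exact ⟨h1, Nat.le_of_dvd (Nat.pos_of_ne_zero hd.2) hd.1⟩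
    _ = m := by simp

lemma key {α : Type*} (s : Finset α) (f g : α → ℕ)
    (h : ∀ i ∈ s, 1 ≤ g i ∧ g i + 1 ≤ f i) :
    ∏ i ∈ s, g i + 2 ^ s.card ≤ ∏ i ∈ s, f i + 1 := by
  induction s using Finset.cons_induction with
  | empty => simp
  | cons a s ha ih =>
    have hg1 : 1 ≤ ∏ i ∈ s, g i :=
      Finset.one_le_prod' fun i hi => (h i (Finset.mem_cons_of_mem hi)).1
    have ha' := h a (Finset.mem_cons_self a s)
    have ih' := ih fun i hi => h i (Finset.mem_cons_of_mem hi)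
    simp only [Finset.prod_cons, Finset.card_cons, pow_succ]
    obtain ⟨t, ht⟩ : ∃ t, 2 ^ s.card = t + 1 :=
      ⟨2 ^ s.card - 1, by have := Nat.one_le_two_pow (n := s.card); omega⟩
    set G := ∏ i ∈ s, g i
    set E := ∏ i ∈ s, f i
    rw [ht] at ih' ⊢
    have hE : G + t ≤ E := by omega
    have h1 : f a * G + f a * t ≤ f a * E := by
      rw [← Nat.mul_add]; exact Nat.mul_le_mul_left _ hE
    have h2 : g a * G + G ≤ f a * G := by
      calc g a * G + G = (g a + 1) * G := by ring
        _ ≤ f a * G := Nat.mul_le_mul_right _ ha'.2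
    have h3 : 2 * t ≤ f a * t := Nat.mul_le_mul_right _ (by omega)
    linarith

/-- For n ≥ 1, τ(n) + 1 ≥ τ^(e)(n) + τ*(n), where τ*(n) = 2^ω(n). -/
theorem tau_add_one_ge (n : ℕ) (hn : 1 ≤ n) :
    n.divisors.card + 1 ≥ taue n + 2 ^ n.primeFactors.card := by
  have hn0 : n ≠ 0 := by omega
  rw [Nat.card_divisors hn0, taue]
  apply key
  intro p hp
  have hpos : 1 ≤ n.factorization p :=
    (Nat.Prime.factorization_pos_of_dvd (Nat.prime_of_mem_primeFactors hp) hn0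
      (Nat.dvd_of_mem_primeFactors hp))
  refine ⟨Finset.card_pos.mpr ⟨1, Nat.one_mem_divisors.mpr (by omega)⟩, ?_⟩
  have := card_divisors_le_self' (n.factorization p)
  omega
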